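/- Let f : X → S be a proper morphism of schemes, U ⊆ X and V ⊆ S open dense subsets with f(U) ⊆ V. Then the induced morphism g : U → V is proper if and only if U = f^{-1}(V). -/

import Mathlib

open AlgebraicGeometry

open CategoryTheory CategoryTheory.Limits

/-- Cancellation for properness: if `f ≫ g` is proper and `g` is separated, then `f` is proper. -/
lemma isProper_of_comp' {X Y Z : Scheme} (f : X ⟶ Y) (g : Y ⟶ Z)
    [hfg : IsProper (f ≫ g)] [IsSeparated g] : IsProper f := by
  rw [← pullback.lift_snd (𝟙 _) f (Category.id_comp (f ≫ g))]
  exact MorphismProperty.comp_mem @IsProper _ _ inferInstance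
    (MorphismProperty.IsStableUnderBaseChange.of_isPullback (P := @IsProper) (IsPullback.of_hasPullback (f ≫ g) g) hfg)

/-- Let `f : X → S` be a proper morphism of schemes, `U ⊆ X` and `V ⊆ S` open dense subsets
with `f(U) ⊆ V`. Then the induced morphism `g : U → V` is proper iff `U = f⁻¹(V)`. -/
theorem stmt_14 {X S : Scheme} (f : X ⟶ S) [IsProper f]
    (U : X.Opens) (V : S.Opens) (hU : Dense (U : Set X)) (hV : Dense (V : Set S))
    (hUV : U ≤ f ⁻¹ᵁ V) :
    IsProper (f.resLE V U hUV) ↔ U = f ⁻¹ᵁ V := by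
  have hres : IsProper (f ∣_ V) := IsZariskiLocalAtTarget.restrict ‹IsProper f› V
  constructor
  · intro hg
    refine le_antisymm hUV fun x hx ↦ ?_
    have hW : IsProper (f.resLE V (f ⁻¹ᵁ V) le_rfl) := by
      rwa [Scheme.Hom.resLE_eq_morphismRestrict (f := f) (U := V)]
    have hcomp : X.homOfLE hUV ≫ f.resLE V (f ⁻¹ᵁ V) le_rfl = f.resLE V U hUV :=
      Scheme.Hom.map_resLE f le_rfl hUV
    have hcp : IsProper (X.homOfLE hUV ≫ f.resLE V (f ⁻¹ᵁ V) le_rfl) := hcomp ▸ hg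
    have hsep : IsSeparated (f.resLE V (f ⁻¹ᵁ V) le_rfl) := hW.toIsSeparated
    have hi : IsProper (X.homOfLE hUV) :=
      isProper_of_comp' (X.homOfLE hUV) (f.resLE V (f ⁻¹ᵁ V) le_rfl)
    have hclosed : IsClosed (Set.range (X.homOfLE hUV).base) :=
      (X.homOfLE hUV).isClosedMap.isClosed_range
    have hrange : Set.range ((X.homOfLE hUV).base) = ((f ⁻¹ᵁ V).ι.base) ⁻¹' U := by
      ext y
      simp only [Set.mem_range, Set.mem_preimage, SetLike.mem_coe]
      constructor
      · rintro ⟨u, rfl⟩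
        have h1 := congr($(X.homOfLE_ι hUV).base u)
        simp only [Scheme.Hom.comp_base, TopCat.comp_app] at h1
        exact h1 ▸ u.2
      · intro hy
        exact ⟨⟨y.1, hy⟩, Subtype.ext (Scheme.homOfLE_apply hUV _)⟩
    have hdense : Dense (Set.range (X.homOfLE hUV).base) := by
      rw [hrange]
      exact hU.preimage (f ⁻¹ᵁ V).ι.isOpenEmbedding.isOpenMap
    have hall : Set.range ((X.homOfLE hUV).base) = Set.univ :=
      hclosed.closure_eq ▸ hdense.closure_eq
    have hmem : (⟨x, hx⟩ : (f ⁻¹ᵁ V).toScheme) ∈ Set.range ((X.homOfLE hUV).base) := by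
      rw [hall]; trivial
    obtain ⟨u, hu⟩ := hmem
    have h3 : u.1 = x := by
      have := Scheme.homOfLE_apply hUV u
      rw [hu] at this
      exact this.symm
    exact h3 ▸ u.2
  · intro h
    subst h
    rwa [← Scheme.Hom.resLE_eq_morphismRestrict (f := f) (U := V)] at hres
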